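/- arXiv:1205.0797 — 8 statements merged into one kernel-verified Lean document; each statement's English description precedes it below -/
import Mathlib

section
/- For the ideals u_{n,i} = Σ_{j=i}^{n} P_{j-1}∂ⱼ of the Lie algebra u_n, one has [u_{n,i}, u_{n,i}] ⊆ u_{n,i+1} for all 1 ≤ i ≤ n. -/
open MvPolynomial

noncomputable section

/-- The polynomial algebra `Pₙ = K[x₀,…,x_{n-1}]`. -/
abbrev Pn (K : Type) [Field K] (n : ℕ) : Type := MvPolynomial (Fin n) K

/-- The Lie algebra of `K`-derivations of `Pₙ`. -/
abbrev DerPn (K : Type) [Field K] (n : ℕ) : Type :=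
  Derivation K (Pn K n) (Pn K n)

/-- The subalgebra `P_j = K[x₀,…,x_{j-1}]` of `Pₙ` (0-indexed: variables with index `< j`). -/
def Psub (K : Type) [Field K] (n j : ℕ) : Subalgebra K (Pn K n) :=
  MvPolynomial.supported K {k : Fin n | (k : ℕ) < j}

/-- The subspace `u_{n,i} = Σ_{j=i}^n P_{j-1}∂_j` (1-indexed `i`; `U K n 1 = u_n`).
A derivation `D` lies in it iff `D(x_j) ∈ P_{j-1}` for all `j` and `D(x_j) = 0` for `j < i`
(0-indexed: `D (X j) = 0` when `(j:ℕ)+1 < i`). -/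
def U (K : Type) [Field K] (n i : ℕ) : Submodule K (DerPn K n) where
  carrier := {D | ∀ j : Fin n, D (X j) ∈ Psub K n j ∧ ((j : ℕ) + 1 < i → D (X j) = 0)}
  add_mem' := by
    intro a b ha hb j
    refine ⟨?_, fun h => ?_⟩
    · simpa using Subalgebra.add_mem _ (ha j).1 (hb j).1
    · simp [(ha j).2 h, (hb j).2 h]
  zero_mem' := by
    intro j
    refine ⟨by simpa using (Psub K n j).zero_mem, fun _ => rfl⟩
  smul_mem' := by
    intro c a ha j
    refine ⟨?_, fun h => ?_⟩
    · simpa using Subalgebra.smul_mem _ (ha j).1 c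
    · simp [(ha j).2 h]

/-- The span of all brackets `⁅a,b⁆` with `a ∈ A`, `b ∈ B`. -/
def lieSpan (K : Type) [Field K] (n : ℕ) (A B : Submodule K (DerPn K n)) :
    Submodule K (DerPn K n) :=
  Submodule.span K {x | ∃ a ∈ A, ∃ b ∈ B, x = ⁅a, b⁆}

/-- The derived series of a subspace `G`: `G_{(0)} = G`, `G_{(i+1)} = [G_{(i)}, G_{(i)}]`. -/
def derivedSub (K : Type) [Field K] (n : ℕ) (G : Submodule K (DerPn K n)) : ℕ → Submodule K (DerPn K n)
  | 0 => G
  | i + 1 => lieSpan K n (derivedSub K n G i) (derivedSub K n G i)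

lemma psub_mono (K : Type) [Field K] (n : ℕ) {j m : ℕ} (h : j ≤ m) :
    Psub K n j ≤ Psub K n m :=
  MvPolynomial.supported_mono (fun k hk => lt_of_lt_of_le hk h)

lemma deriv_mem (K : Type) [Field K] (n : ℕ) (D : DerPn K n) (j : ℕ)
    (h : ∀ k : Fin n, (k : ℕ) < j → D (X k) ∈ Psub K n j) :
    ∀ p ∈ Psub K n j, D p ∈ Psub K n j := by
  let T : Subalgebra K (Pn K n) :=
    { carrier := {p | p ∈ Psub K n j ∧ D p ∈ Psub K n j}
      mul_mem' := by
        rintro a b ⟨ha1, ha2⟩ ⟨hb1, hb2⟩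
        refine ⟨mul_mem ha1 hb1, ?_⟩
        rw [Derivation.leibniz, smul_eq_mul, smul_eq_mul]
        exact add_mem (mul_mem ha1 hb2) (mul_mem hb1 ha2)
      add_mem' := by
        rintro a b ⟨ha1, ha2⟩ ⟨hb1, hb2⟩
        exact ⟨add_mem ha1 hb1, by rw [map_add]; exact add_mem ha2 hb2⟩
      algebraMap_mem' := fun r =>
        ⟨Subalgebra.algebraMap_mem _ r, by simp only [Derivation.map_algebraMap]; exact zero_mem _⟩ }
  intro p hp
  have : Psub K n j ≤ T := by
    rw [Psub, MvPolynomial.supported_eq_adjoin_X]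
    apply Algebra.adjoin_le
    rintro _ ⟨k, hk, rfl⟩
    exact ⟨by rw [Psub, MvPolynomial.mem_supported, MvPolynomial.vars_X]; simpa using hk,
      h k hk⟩
  exact (this hp).2

lemma deriv_zero_of_psub (K : Type) [Field K] (n : ℕ) (D : DerPn K n) (j : ℕ)
    (h : ∀ k : Fin n, (k : ℕ) < j → D (X k) = 0) :
    ∀ p ∈ Psub K n j, D p = 0 := by
  let T : Subalgebra K (Pn K n) :=
    { carrier := {p | D p = 0}
      mul_mem' := by
        intro a b ha hb
        simp only [Set.mem_setOf_eq] at *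
        rw [Derivation.leibniz, ha, hb]; simp
      add_mem' := by
        intro a b ha hb
        simp only [Set.mem_setOf_eq] at *
        rw [map_add, ha, hb, add_zero]
      algebraMap_mem' := fun r => by simp }
  intro p hp
  have : Psub K n j ≤ T := by
    rw [Psub, MvPolynomial.supported_eq_adjoin_X]
    apply Algebra.adjoin_le
    rintro _ ⟨k, hk, rfl⟩
    exact h k hk
  exact this hp

/-- `[u_{n,i}, u_{n,i}] ⊆ u_{n,i+1}` for all `1 ≤ i ≤ n`. -/
theorem bracket_U_self (K : Type) [Field K] [CharZero K] (n : ℕ) (hn : 2 ≤ n)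
    (i : ℕ) (h1 : 1 ≤ i) (h2 : i ≤ n) :
    lieSpan K n (U K n i) (U K n i) ≤ U K n (i + 1) := by
  apply Submodule.span_le.2
  rintro _ ⟨a, ha, b, hb, rfl⟩
  intro j
  constructor
  · rw [Derivation.commutator_apply]
    exact sub_mem
      (deriv_mem K n a j (fun k hk => psub_mono K n hk.le ((ha k).1)) _ ((hb j).1))
      (deriv_mem K n b j (fun k hk => psub_mono K n hk.le ((hb k).1)) _ ((ha j).1))
  · intro hj
    have hz : ∀ D : DerPn K n, D ∈ U K n i → ∀ k : Fin n, (k : ℕ) < j → D (X k) = 0 :=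
      fun D hD k hk => (hD k).2 (by omega)
    rw [Derivation.commutator_apply,
      deriv_zero_of_psub K n a j (hz a ha) _ ((hb j).1),
      deriv_zero_of_psub K n b j (hz b hb) _ ((ha j).1), sub_zero]
end
end

section
/- For the subspaces u_{n,i} = Σ_{j=i}^{n} P_{j-1}∂ⱼ of the Lie algebra u_n, it holds that [u_{n,i}, u_{n,j}] ⊆ u_{n,j} whenever i < j. -/
open MvPolynomial

noncomputable section

-- auxiliary lemmas to insert
lemma Psub_mono (K : Type) [Field K] (n : ℕ) {a b : ℕ} (h : a ≤ b) :
    Psub K n a ≤ Psub K n b :=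
  MvPolynomial.supported_mono (fun k hk => lt_of_lt_of_le hk h)

lemma derivation_maps_Psub (K : Type) [Field K] (n m : ℕ) (D : DerPn K n)
    (h : ∀ l : Fin n, (l : ℕ) < m → D (X l) ∈ Psub K n m) :
    ∀ p ∈ Psub K n m, D p ∈ Psub K n m := by
  intro p hp
  have hp' : p ∈ Algebra.adjoin K (X '' {k : Fin n | (k : ℕ) < m} :
      Set (Pn K n)) := by
    rwa [Psub, MvPolynomial.supported] at hp
  clear hp
  induction hp' using Algebra.adjoin_induction with
  | mem x hx =>
      obtain ⟨l, hl, rfl⟩ := hx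
      exact h l hl
  | algebraMap r => simpa using (Psub K n m).zero_mem
  | add x y _ _ hx hy => rw [map_add]; exact Subalgebra.add_mem _ hx hy
  | mul x y hx' hy' hx hy =>
      rw [Derivation.leibniz, smul_eq_mul, smul_eq_mul]
      have hx'' : x ∈ Psub K n m := by rwa [Psub, MvPolynomial.supported]
      have hy'' : y ∈ Psub K n m := by rwa [Psub, MvPolynomial.supported]
      exact Subalgebra.add_mem _
        (Subalgebra.mul_mem _ hx'' hy) (Subalgebra.mul_mem _ hy'' hx)

lemma derivation_zero_Psub (K : Type) [Field K] (n m : ℕ) (D : DerPn K n)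
    (h : ∀ l : Fin n, (l : ℕ) < m → D (X l) = 0) :
    ∀ p ∈ Psub K n m, D p = 0 := by
  intro p hp
  have hp' : p ∈ Algebra.adjoin K (X '' {k : Fin n | (k : ℕ) < m} :
      Set (Pn K n)) := by
    rwa [Psub, MvPolynomial.supported] at hp
  clear hp
  induction hp' using Algebra.adjoin_induction with
  | mem x hx => obtain ⟨l, hl, rfl⟩ := hx; exact h l hl
  | algebraMap r => simp
  | add x y _ _ hx hy => rw [map_add, hx, hy, add_zero]
  | mul x y _ _ hx hy => rw [Derivation.leibniz, hx, hy, smul_zero, smul_zero, add_zero]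

/-- `[u_{n,i}, u_{n,j}] ⊆ u_{n,j}` whenever `i < j`. -/
theorem bracket_U_lt (K : Type) [Field K] [CharZero K] (n : ℕ) (hn : 2 ≤ n)
    (i j : ℕ) (h1 : 1 ≤ i) (hij : i < j) (hj : j ≤ n) :
    lieSpan K n (U K n i) (U K n j) ≤ U K n j := by
  rw [lieSpan, Submodule.span_le]
  rintro x ⟨a, ha, b, hb, rfl⟩
  intro k
  have hbk : b (X k) ∈ Psub K n k := (hb k).1
  have hak : a (X k) ∈ Psub K n k := (ha k).1
  have hamap : ∀ p ∈ Psub K n (k : ℕ), a p ∈ Psub K n (k : ℕ) :=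
    derivation_maps_Psub K n k a (fun l hl =>
      Psub_mono K n (le_of_lt hl) (ha l).1)
  have hbmap : ∀ p ∈ Psub K n (k : ℕ), b p ∈ Psub K n (k : ℕ) :=
    derivation_maps_Psub K n k b (fun l hl =>
      Psub_mono K n (le_of_lt hl) (hb l).1)
  constructor
  · rw [Derivation.commutator_apply]
    exact Subalgebra.sub_mem _ (hamap _ hbk) (hbmap _ hak)
  · intro hk
    have hb0 : b (X k) = 0 := (hb k).2 hk
    have hbz : b (a (X k)) = 0 := by
      refine derivation_zero_Psub K n k b (fun l hl => (hb l).2 ?_) _ hak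
      omega
    rw [Derivation.commutator_apply, hb0, map_zero, hbz, sub_zero]
end
end

section
/- Each u_{n,i} = Σ_{j=i}^{n} P_{j-1}∂ⱼ is a Lie ideal of the Lie algebra u_n of unitriangular polynomial derivations. -/
open MvPolynomial

noncomputable section

lemma der_mem (K : Type) [Field K] (n j : ℕ) (D : DerPn K n)
    (h : ∀ k : Fin n, (k : ℕ) < j → D (X k) ∈ Psub K n j)
    {p : Pn K n} (hp : p ∈ Psub K n j) : D p ∈ Psub K n j := by
  induction hp using Algebra.adjoin_induction with
  | mem x hx => obtain ⟨k, hk, rfl⟩ := hx; exact h k hk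
  | algebraMap r => simpa using zero_mem (Psub K n j)
  | add x y hx hy ihx ihy => simpa using add_mem ihx ihy
  | mul x y hx hy ihx ihy =>
    rw [Derivation.leibniz, smul_eq_mul, smul_eq_mul]
    exact add_mem (mul_mem hx ihy) (mul_mem hy ihx)

lemma der_zero (K : Type) [Field K] (n j : ℕ) (D : DerPn K n)
    (h : ∀ k : Fin n, (k : ℕ) < j → D (X k) = 0)
    {p : Pn K n} (hp : p ∈ Psub K n j) : D p = 0 := by
  induction hp using Algebra.adjoin_induction with
  | mem x hx => obtain ⟨k, hk, rfl⟩ := hx; exact h k hk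
  | algebraMap r => simp
  | add x y hx hy ihx ihy => simp [ihx, ihy]
  | mul x y hx hy ihx ihy => rw [Derivation.leibniz, ihx, ihy]; simp

/-- each `u_{n,i}` is a Lie ideal of `u_n`: it is contained in `u_n`
and `[u_n, u_{n,i}] ⊆ u_{n,i}`. -/
theorem U_isLieIdeal (K : Type) [Field K] [CharZero K] (n : ℕ) (hn : 2 ≤ n)
    (i : ℕ) (h1 : 1 ≤ i) (h2 : i ≤ n) :
    U K n i ≤ U K n 1 ∧ lieSpan K n (U K n 1) (U K n i) ≤ U K n i := by
  refine ⟨fun D hD j => ⟨(hD j).1, fun h => absurd h (by omega)⟩, ?_⟩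
  rw [lieSpan, Submodule.span_le]
  rintro x ⟨a, ha, b, hb, rfl⟩
  intro j
  have hab : ∀ k : Fin n, (k : ℕ) < (j : ℕ) → a (X k) ∈ Psub K n j :=
    fun k hk => Psub_mono K n (le_of_lt hk) (ha k).1
  have hbb : ∀ k : Fin n, (k : ℕ) < (j : ℕ) → b (X k) ∈ Psub K n j :=
    fun k hk => Psub_mono K n (le_of_lt hk) (hb k).1
  refine ⟨?_, fun hj => ?_⟩
  · rw [Derivation.commutator_apply]
    exact sub_mem (der_mem K n j a hab (hb j).1) (der_mem K n j b hbb (ha j).1)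
  · have hb0 : ∀ k : Fin n, (k : ℕ) < (j : ℕ) → b (X k) = 0 :=
      fun k hk => (hb k).2 (by omega)
    rw [Derivation.commutator_apply, (hb j).2 hj, map_zero, zero_sub,
      der_zero K n j b hb0 (ha j).1, neg_zero]
end
end

section
/- The derived series of the Lie algebra u_n of unitriangular polynomial derivations satisfies (u_n)_{(i)} = u_{n,i+1} for all i ≥ 0, where (u_n)_{(0)} = u_n and (u_n)_{(i)} = [(u_n)_{(i-1)}, (u_n)_{(i-1)}]. In particular, the derived series is a strictly descending chain of length n reaching 0 at step n. -/
open MvPolynomial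

noncomputable section

section Aux

variable {K : Type} [Field K] {n : ℕ}

lemma mem_U_iff {i : ℕ} {D : DerPn K n} :
    D ∈ U K n i ↔ ∀ j : Fin n, D (X j) ∈ Psub K n j ∧ ((j : ℕ) + 1 < i → D (X j) = 0) :=
  Iff.rfl

lemma D_preserve (D : DerPn K n) (hD : ∀ m : Fin n, D (X m) ∈ Psub K n (m : ℕ)) (k : ℕ) :
    ∀ p ∈ Psub K n k, D p ∈ Psub K n k := by
  intro p hp
  rw [Psub, supported_eq_adjoin_X] at hp
  induction hp using Algebra.adjoin_induction with
  | mem x hx =>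
    obtain ⟨m, hm, rfl⟩ := hx
    have h := hD m
    rw [Psub, mem_supported] at h ⊢
    intro a ha
    have h2 : (a : ℕ) < (m : ℕ) := h ha
    have hm' : (m : ℕ) < k := hm
    show (a : ℕ) < k
    omega
  | algebraMap r => rw [Derivation.map_algebraMap]; exact zero_mem _
  | add x y hx hy ihx ihy => rw [map_add]; exact add_mem ihx ihy
  | mul x y hx hy ihx ihy =>
    rw [D.leibniz, smul_eq_mul, smul_eq_mul]
    exact add_mem (mul_mem hx ihy) (mul_mem hy ihx)

lemma D_kill (D : DerPn K n) (i : ℕ) (hD : ∀ m : Fin n, (m : ℕ) < i → D (X m) = 0) :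
    ∀ p ∈ Psub K n i, D p = 0 := by
  intro p hp
  rw [Psub, supported_eq_adjoin_X] at hp
  induction hp using Algebra.adjoin_induction with
  | mem x hx => obtain ⟨m, hm, rfl⟩ := hx; exact hD m hm
  | algebraMap r => rw [Derivation.map_algebraMap]
  | add x y hx hy ihx ihy => rw [map_add, ihx, ihy, add_zero]
  | mul x y hx hy ihx ihy => rw [D.leibniz, ihx, ihy, smul_zero, smul_zero, add_zero]

lemma antideriv [CharZero K] (s : Set (Fin n)) (i : Fin n) (hi : i ∈ s) (p : Pn K n)
    (hp : p ∈ supported K s) : ∃ g ∈ supported K s, pderiv i g = p := by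
  classical
  refine ⟨∑ d ∈ p.support, monomial (d + Finsupp.single i 1) (coeff d p / ((d i : K) + 1)), ?_, ?_⟩
  · apply sum_mem
    intro d hd
    rw [mem_supported]
    by_cases hc : coeff d p / ((d i : K) + 1) = 0
    · rw [hc, map_zero, vars_0]; simp
    · rw [vars_monomial hc]
      intro m hm
      rcases Finset.mem_union.1 (Finsupp.support_add hm) with h | h
      · exact mem_supported.1 hp ((mem_vars m).2 ⟨d, hd, h⟩)
      · have := Finsupp.support_single_subset h
        simp only [Finset.mem_singleton] at this
        rwa [this]
  · rw [map_sum]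
    have hterm : ∀ d ∈ p.support,
        pderiv i (monomial (d + Finsupp.single i 1) (coeff d p / ((d i : K) + 1)))
          = monomial d (coeff d p) := by
      intro d _
      have h2 : (d + Finsupp.single i 1) - Finsupp.single i 1 = d := add_tsub_cancel_right _ _
      have h1 : ((d + Finsupp.single i 1 : Fin n →₀ ℕ)) i = d i + 1 := by
        rw [Finsupp.add_apply, Finsupp.single_eq_same]
      rw [pderiv_monomial, h2, h1]
      congr 1
      push_cast
      exact div_mul_cancel₀ _ (Nat.cast_add_one_ne_zero (d i))
    rw [Finset.sum_congr rfl hterm, support_sum_monomial_coeff]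

lemma pderiv_mem_U (i' : Fin n) : (pderiv i' : DerPn K n) ∈ U K n ((i' : ℕ) + 1) := by
  classical
  rw [mem_U_iff]
  intro j
  constructor
  · by_cases h : j = i'
    · subst h; rw [pderiv_X_self]; exact one_mem _
    · rw [pderiv_X_of_ne h]; exact zero_mem _
  · intro hj
    have hne : j ≠ i' := by intro h; subst h; omega
    rw [pderiv_X_of_ne hne]

lemma lieSpan_U [CharZero K] (i : ℕ) :
    lieSpan K n (U K n (i + 1)) (U K n (i + 1)) = U K n (i + 2) := by
  classical
  set e : (Fin n → Pn K n) ≃ₗ[K] DerPn K n := mkDerivationEquiv K with he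
  have eX : ∀ (f : Fin n → Pn K n) (j : Fin n), e f (X j) = f j := fun f j =>
    mkDerivation_X (R := K) f j
  apply le_antisymm
  · rw [lieSpan]
    apply Submodule.span_le.2
    rintro x ⟨a, ha, b, hb, rfl⟩
    rw [SetLike.mem_coe, mem_U_iff]
    intro j
    have ha1 : ∀ m : Fin n, a (X m) ∈ Psub K n (m : ℕ) := fun m => (ha m).1
    have hb1 : ∀ m : Fin n, b (X m) ∈ Psub K n (m : ℕ) := fun m => (hb m).1
    constructor
    · rw [Derivation.commutator_apply]
      exact sub_mem (D_preserve a ha1 _ _ (hb1 j)) (D_preserve b hb1 _ _ (ha1 j))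
    · intro hj
      rw [Derivation.commutator_apply]
      by_cases hji : (j : ℕ) < i
      · rw [(ha j).2 (by omega), (hb j).2 (by omega), map_zero, map_zero, sub_zero]
      · have hj_eq : (j : ℕ) = i := by omega
        have hbk : ∀ m : Fin n, (m : ℕ) < i → b (X m) = 0 := fun m hm => (hb m).2 (by omega)
        have hak : ∀ m : Fin n, (m : ℕ) < i → a (X m) = 0 := fun m hm => (ha m).2 (by omega)
        have h1 : b (a (X j)) = 0 := D_kill b i hbk _ (by rw [← hj_eq]; exact ha1 j)
        have h2 : a (b (X j)) = 0 := D_kill a i hak _ (by rw [← hj_eq]; exact hb1 j)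
        rw [h1, h2, sub_zero]
  · intro D hD
    have hDe : D = ∑ k : Fin n, e (Pi.single k (D (X k))) := by
      calc D = e (e.symm D) := (e.apply_symm_apply D).symm
        _ = e (∑ k : Fin n, Pi.single k (D (X k))) := by
            rw [show (e.symm D) = (fun k => D (X k)) from rfl,
              Finset.univ_sum_single (fun k => D (X k))]
        _ = ∑ k : Fin n, e (Pi.single k (D (X k))) := map_sum e _ _
    rw [hDe]
    apply sum_mem
    intro k _
    by_cases hk : (k : ℕ) < i + 1
    · have h0 : D (X k) = 0 := (hD k).2 (by omega)
      rw [h0, Pi.single_zero, map_zero]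
      exact zero_mem _
    · push_neg at hk
      have hik : i < (k : ℕ) := by omega
      have hin : i < n := lt_trans hik k.isLt
      set i' : Fin n := ⟨i, hin⟩ with hi'
      have hvi : (i' : ℕ) = i := rfl
      obtain ⟨g, hg, hpg⟩ := antideriv {m : Fin n | (m : ℕ) < (k : ℕ)} i' hik (D (X k)) ((hD k).1)
      have hki : k ≠ i' := by intro h; rw [h] at hik; omega
      have hbU : e (Pi.single k g) ∈ U K n (i + 1) := by
        rw [mem_U_iff]
        intro j
        constructor
        · rw [eX]
          by_cases hj : j = k
          · subst hj; rw [Pi.single_eq_same]; exact hg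
          · rw [Pi.single_eq_of_ne hj]; exact zero_mem _
        · intro hj
          have hjk : j ≠ k := by intro h; subst h; omega
          rw [eX, Pi.single_eq_of_ne hjk]
      have haU : (pderiv i' : DerPn K n) ∈ U K n (i + 1) := pderiv_mem_U i'
      have heq : e (Pi.single k (D (X k))) = ⁅(pderiv i' : DerPn K n), e (Pi.single k g)⁆ := by
        apply derivation_ext
        intro j
        by_cases hj : j = k
        · subst hj
          rw [Derivation.commutator_apply, pderiv_X_of_ne hki, map_zero, sub_zero, eX, eX,
            Pi.single_eq_same, Pi.single_eq_same, hpg]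
        · rw [Derivation.commutator_apply, eX, eX, Pi.single_eq_of_ne hj,
            Pi.single_eq_of_ne hj, map_zero]
          by_cases hji : j = i'
          · subst hji
            rw [pderiv_X_self, Derivation.map_one_eq_zero, sub_zero]
          · rw [pderiv_X_of_ne hji, map_zero, sub_zero]
      rw [heq, lieSpan]
      exact Submodule.subset_span ⟨pderiv i', haU, e (Pi.single k g), hbU, rfl⟩

end Aux

/-- the derived series of `u_n`: `(u_n)_{(i)} = u_{n,i+1}` for all `i ≥ 0`;
it is strictly descending and reaches `0` at step `n`. -/
theorem derivedSeries_un (K : Type) [Field K] [CharZero K] (n : ℕ) (hn : 2 ≤ n) :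
    (∀ i : ℕ, derivedSub K n (U K n 1) i = U K n (i + 1)) ∧
    (∀ i : ℕ, i < n → derivedSub K n (U K n 1) (i + 1) < derivedSub K n (U K n 1) i) ∧
    derivedSub K n (U K n 1) n = ⊥ := by
  have part1 : ∀ i : ℕ, derivedSub K n (U K n 1) i = U K n (i + 1) := by
    intro i
    induction i with
    | zero => rfl
    | succ i ih => rw [derivedSub, ih]; exact lieSpan_U i
  refine ⟨part1, ?_, ?_⟩
  · intro i hi
    rw [part1, part1]
    apply SetLike.lt_iff_le_and_exists.2
    constructor
    · intro D hD
      rw [mem_U_iff] at hD ⊢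
      exact fun j => ⟨(hD j).1, fun h => (hD j).2 (by omega)⟩
    · refine ⟨pderiv ⟨i, hi⟩, pderiv_mem_U ⟨i, hi⟩, fun hmem => ?_⟩
      rw [mem_U_iff] at hmem
      have := (hmem ⟨i, hi⟩).2 (by simp)
      rw [pderiv_X_self] at this
      exact one_ne_zero this
  · rw [part1 n]
    apply le_bot_iff.1
    intro D hD
    rw [Submodule.mem_bot]
    apply derivation_ext
    intro j
    have hj := j.isLt
    rw [(hD j).2 (by omega)]
    rfl
end
end

section
/- The Lie algebra u_n of unitriangular polynomial derivations is solvable of derived length exactly n. -/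
open MvPolynomial

noncomputable section

section Aux

variable (K : Type) [Field K] [CharZero K] (n : ℕ)

omit [CharZero K] in
lemma deriv_mem_psub (D : DerPn K n) (hD : ∀ k : Fin n, D (X k) ∈ Psub K n k)
    (j : ℕ) {p : Pn K n} (hp : p ∈ Psub K n j) : D p ∈ Psub K n j := by
  rw [Psub, MvPolynomial.supported] at hp
  refine Algebra.adjoin_induction (p := fun x _ => D x ∈ Psub K n j) ?_ ?_ ?_ ?_ hp
  · rintro _ ⟨k, hk, rfl⟩
    show D (X k) ∈ Psub K n j
    have h2 : ({m : Fin n | (m : ℕ) < (k : ℕ)} : Set (Fin n)) ⊆ {m : Fin n | (m : ℕ) < j} :=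
      by intro m hm; simp only [Set.mem_setOf_eq] at *; omega
    exact MvPolynomial.supported_mono h2 (hD k)
  · intro r
    rw [Derivation.map_algebraMap]
    exact (Psub K n j).zero_mem
  · intro x y hx hy ihx ihy
    rw [map_add]
    exact Subalgebra.add_mem _ ihx ihy
  · intro x y hx hy ihx ihy
    rw [Derivation.leibniz, smul_eq_mul, smul_eq_mul]
    exact Subalgebra.add_mem _ (Subalgebra.mul_mem _ hx ihy) (Subalgebra.mul_mem _ hy ihx)

omit [CharZero K] in
lemma deriv_zero_psub (D : DerPn K n) (j : ℕ)
    (hD : ∀ k : Fin n, (k : ℕ) < j → D (X k) = 0)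
    {p : Pn K n} (hp : p ∈ Psub K n j) : D p = 0 := by
  rw [Psub, MvPolynomial.supported] at hp
  refine Algebra.adjoin_induction (p := fun x _ => D x = 0) ?_ ?_ ?_ ?_ hp
  · rintro _ ⟨k, hk, rfl⟩
    exact hD k hk
  · intro r
    rw [Derivation.map_algebraMap]
  · intro x y hx hy ihx ihy
    rw [map_add, ihx, ihy, add_zero]
  · intro x y hx hy ihx ihy
    rw [Derivation.leibniz, ihx, ihy, smul_zero, smul_zero, add_zero]
end Aux

section Aux2
variable (K : Type) [Field K] [CharZero K] (n : ℕ)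

omit [CharZero K] in
lemma lieSpan_le_U {A : Submodule K (DerPn K n)} {i : ℕ} (hA : A ≤ U K n i) :
    lieSpan K n A A ≤ U K n (i + 1) := by
  rw [lieSpan, Submodule.span_le]
  rintro x ⟨a, ha, b, hb, rfl⟩
  intro j
  have ha' := hA ha
  have hb' := hA hb
  constructor
  · rw [Derivation.commutator_apply]
    exact Subalgebra.sub_mem _
      (deriv_mem_psub K n a (fun k => (ha' k).1) j (hb' j).1)
      (deriv_mem_psub K n b (fun k => (hb' k).1) j (ha' j).1)
  · intro hj
    have hza : ∀ k : Fin n, (k : ℕ) < (j : ℕ) → a (X k) = 0 :=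
      fun k hk => (ha' k).2 (by omega)
    have hzb : ∀ k : Fin n, (k : ℕ) < (j : ℕ) → b (X k) = 0 :=
      fun k hk => (hb' k).2 (by omega)
    rw [Derivation.commutator_apply,
      deriv_zero_psub K n a j hza (hb' j).1,
      deriv_zero_psub K n b j hzb (ha' j).1, sub_zero]

omit [CharZero K] in
lemma derivedSub_le_U : ∀ i : ℕ, derivedSub K n (U K n 1) i ≤ U K n (i + 1) := by
  intro i
  induction i with
  | zero =>
      intro D hD j
      exact ⟨(hD j).1, fun h => by omega⟩
  | succ i ih => exact lieSpan_le_U K n ih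

omit [CharZero K] in
lemma derivedSub_top_eq_bot : derivedSub K n (U K n 1) n = ⊥ := by
  rw [eq_bot_iff]
  intro D hD
  have hD' := derivedSub_le_U K n n hD
  have : D = 0 := by
    apply MvPolynomial.derivation_ext
    intro k
    have := (hD' k).2 (by omega)
    simpa using this
  simp [this]

/-- The monomial `x_i x_{i+1} ⋯ x_{j-1}` (product of `X k` over `i ≤ k < j`). -/
def prodX (i j : ℕ) : Pn K n :=
  ∏ k ∈ Finset.univ.filter (fun k : Fin n => i ≤ (k : ℕ) ∧ (k : ℕ) < j), X k

/-- The derivation `T i j = (x_i ⋯ x_{j-1}) ∂_j`. -/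
def T (i : ℕ) (j : Fin n) : DerPn K n :=
  mkDerivation K (Pi.single j (prodX K n i (j : ℕ)))

omit [CharZero K] in
lemma T_apply_X (i : ℕ) (j k : Fin n) :
    T K n i j (X k) = if k = j then prodX K n i (j : ℕ) else 0 := by
  rw [T, mkDerivation_X]
  by_cases h : k = j
  · subst h; rw [if_pos rfl]; exact Pi.single_eq_same _ _
  · rw [if_neg h]; exact Pi.single_eq_of_ne h _

omit [CharZero K] in
lemma prodX_self (i j : ℕ) (h : j ≤ i) : prodX K n i j = 1 := by
  rw [prodX, Finset.prod_eq_one]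
  intro k hk
  simp only [Finset.mem_filter] at hk
  omega

omit [CharZero K] in
lemma prodX_mem (i j : ℕ) : prodX K n i j ∈ Psub K n j := by
  rw [prodX]
  apply Subalgebra.prod_mem
  intro k hk
  simp only [Finset.mem_filter] at hk
  rw [Psub, MvPolynomial.X_mem_supported]
  exact hk.2.2

omit [CharZero K] in
lemma prodX_split {i j : ℕ} (hij : i < j) (hi : i < n) :
    prodX K n i j = X (⟨i, hi⟩ : Fin n) * prodX K n (i + 1) j := by
  have hset : (Finset.univ.filter (fun k : Fin n => i ≤ (k : ℕ) ∧ (k : ℕ) < j)).erase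
      (⟨i, hi⟩ : Fin n) = Finset.univ.filter (fun k : Fin n => i + 1 ≤ (k : ℕ) ∧ (k : ℕ) < j) := by
    ext k
    simp only [Finset.mem_erase, Finset.mem_filter, Finset.mem_univ, true_and,
      Ne, Fin.ext_iff, Fin.val_mk]
    omega
  rw [prodX, prodX, ← Finset.mul_prod_erase (a := (⟨i, hi⟩ : Fin n)), hset]
  simp only [Finset.mem_filter, Finset.mem_univ, true_and]
  omega

omit [CharZero K] in
lemma deriv_prod_zero (D : DerPn K n) (s : Finset (Fin n))
    (h : ∀ k ∈ s, D (X k) = 0) : D (∏ k ∈ s, X k) = 0 := by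
  classical
  induction s using Finset.induction_on with
  | empty => simp [Derivation.map_one_eq_zero]
  | @insert a s' hx ih =>
      rw [Finset.prod_insert hx, Derivation.leibniz, h a (Finset.mem_insert_self a s'),
        ih (fun k hk => h k (Finset.mem_insert_of_mem hk)), smul_zero, smul_zero, add_zero]

omit [CharZero K] in
lemma T_prodX {i : ℕ} (hi : i < n) {j : ℕ} (hij : i < j) :
    T K n i ⟨i, hi⟩ (prodX K n i j) = prodX K n (i + 1) j := by
  rw [prodX_split K n hij hi, Derivation.leibniz, smul_eq_mul, smul_eq_mul]
  have h1 : T K n i ⟨i, hi⟩ (X (⟨i, hi⟩ : Fin n)) = 1 := by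
    rw [T_apply_X, if_pos rfl, prodX_self K n i i le_rfl]
  have h2 : T K n i ⟨i, hi⟩ (prodX K n (i + 1) j) = 0 := by
    rw [prodX]
    apply deriv_prod_zero
    intro k hk
    simp only [Finset.mem_filter] at hk
    rw [T_apply_X, if_neg]
    intro hkk
    have hki : (k : ℕ) = i := by rw [hkk]
    omega
  rw [h1, h2, mul_zero, mul_one, zero_add]

omit [CharZero K] in
lemma T_bracket {i : ℕ} (hi : i < n) {j : Fin n} (hij : i < (j : ℕ)) :
    T K n (i + 1) j = ⁅T K n i ⟨i, hi⟩, T K n i j⁆ := by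
  apply MvPolynomial.derivation_ext
  intro k
  rw [Derivation.commutator_apply, T_apply_X, T_apply_X, T_apply_X]
  by_cases hk : k = j
  · subst hk
    rw [if_pos rfl, if_pos rfl, if_neg (by intro h; have h2 : (k : ℕ) = i := (by rw [h]); omega)]
    rw [map_zero, sub_zero, T_prodX K n hi hij]
  · rw [if_neg hk, if_neg hk, map_zero, zero_sub]
    by_cases hki : k = ⟨i, hi⟩
    · rw [if_pos hki, prodX_self K n i i le_rfl, Derivation.map_one_eq_zero, neg_zero]
    · rw [if_neg hki, map_zero, neg_zero]

lemma T_mem : ∀ i : ℕ, ∀ j : Fin n, i ≤ (j : ℕ) →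
    T K n i j ∈ derivedSub K n (U K n 1) i := by
  intro i
  induction i with
  | zero =>
      intro j _
      show T K n 0 j ∈ U K n 1
      intro k
      refine ⟨?_, fun h => by omega⟩
      rw [T_apply_X]
      by_cases hk : k = j
      · rw [if_pos hk, hk]; exact prodX_mem K n 0 j
      · rw [if_neg hk]; exact (Psub K n k).zero_mem
  | succ i ih =>
      intro j hij
      have hi : i < n := by have := j.isLt; omega
      show T K n (i + 1) j ∈ lieSpan K n _ _
      apply Submodule.subset_span
      exact ⟨T K n i ⟨i, hi⟩, ih ⟨i, hi⟩ le_rfl, T K n i j, ih j (by omega),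
        T_bracket K n hi (by omega)⟩

lemma derivedSub_ne_bot (hn : 2 ≤ n) : derivedSub K n (U K n 1) (n - 1) ≠ ⊥ := by
  intro hbot
  have hlt : n - 1 < n := by omega
  have hT := T_mem K n (n - 1) ⟨n - 1, hlt⟩ le_rfl
  rw [hbot] at hT
  have : T K n (n - 1) (⟨n - 1, hlt⟩ : Fin n) = 0 := by simpa using hT
  have h1 : T K n (n - 1) (⟨n - 1, hlt⟩ : Fin n) (X ⟨n - 1, hlt⟩) = 1 := by
    rw [T_apply_X, if_pos rfl, prodX_self K n (n-1) (n-1) le_rfl]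
  rw [this] at h1
  simp at h1

end Aux2

/-- `u_n` is solvable of derived length exactly `n`:
the `n`-th term of its derived series vanishes but the `(n-1)`-st does not. -/
theorem un_solvable_length_n (K : Type) [Field K] [CharZero K] (n : ℕ) (hn : 2 ≤ n) :
    derivedSub K n (U K n 1) n = ⊥ ∧ derivedSub K n (U K n 1) (n - 1) ≠ ⊥ :=
  ⟨derivedSub_top_eq_bot K n, derivedSub_ne_bot K n hn⟩
end
end

section
/- Let λᵢ ∈ P_{i-1} and uᵢ ∈ u_{n,i+1}, λ_{i-1} ∈ K*, u_{i-1} ∈ u_{n,i}. If [λ_{i-1}∂_{i-1} + u_{i-1}, λᵢ∂ᵢ + uᵢ] = 0 in u_n, then ∂_{i-1}(λᵢ) = 0, i.e., λᵢ ∈ P_{i-2}. -/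
open MvPolynomial

noncomputable section

/-- Auxiliary: in characteristic zero, if `k ∈ vars p` then `pderiv k p ≠ 0`. -/
lemma pderiv_ne_zero_of_mem_vars {K : Type} [Field K] [CharZero K] {σ : Type}
    [DecidableEq σ] {p : MvPolynomial σ K} {k : σ} (h : k ∈ p.vars) :
    pderiv k p ≠ 0 := by
  obtain ⟨d, hd, hk⟩ := (MvPolynomial.mem_vars k).1 h
  intro h0
  have hcoeff : MvPolynomial.coeff (d - Finsupp.single k 1) (pderiv k p) = 0 := by
    rw [h0]; simp
  rw [p.as_sum, map_sum, MvPolynomial.coeff_sum] at hcoeff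
  rw [Finset.sum_eq_single d] at hcoeff
  · rw [pderiv_monomial, MvPolynomial.coeff_monomial, if_pos rfl] at hcoeff
    rcases mul_eq_zero.1 hcoeff with h1 | h1
    · exact (MvPolynomial.mem_support_iff.1 hd) h1
    · exact (Finsupp.mem_support_iff.1 hk) (Nat.cast_eq_zero.1 h1)
  · intro v hv hvd
    rw [pderiv_monomial, MvPolynomial.coeff_monomial]
    by_cases hvk : v k = 0
    · simp [hvk]
    · have hne : ¬ (v - Finsupp.single k 1 = d - Finsupp.single k 1) := by
        intro heq
        apply hvd
        have h1 : Finsupp.single k 1 ≤ v := by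
          rwa [Finsupp.single_le_iff, Nat.one_le_iff_ne_zero]
        have h2 : Finsupp.single k 1 ≤ d := by
          rw [Finsupp.single_le_iff, Nat.one_le_iff_ne_zero]
          exact Finsupp.mem_support_iff.1 hk
        calc v = v - Finsupp.single k 1 + Finsupp.single k 1 := (tsub_add_cancel_of_le h1).symm
        _ = d - Finsupp.single k 1 + Finsupp.single k 1 := by rw [heq]
        _ = d := tsub_add_cancel_of_le h2
      rw [if_neg hne]
  · intro hd'; exact absurd hd hd'

/-- if `[λ_{i-1}∂_{i-1} + u_{i-1}, λᵢ∂ᵢ + uᵢ] = 0` with `λᵢ ∈ P_{i-1}`,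
`uᵢ ∈ u_{n,i+1}`, `λ_{i-1} ∈ K*`, `u_{i-1} ∈ u_{n,i}`, then `∂_{i-1}(λᵢ) = 0`, i.e.
`λᵢ ∈ P_{i-2}`. (Indices `1`-indexed; `∂ᵢ = pderiv idx` with `(idx:ℕ) = i-1`.) -/
theorem lambda_drops_one (K : Type) [Field K] [CharZero K] (n : ℕ) (hn : 2 ≤ n)
    (i : ℕ) (h2 : 2 ≤ i) (hin : i ≤ n)
    (idx1 idx2 : Fin n) (hidx1 : (idx1 : ℕ) = i - 2) (hidx2 : (idx2 : ℕ) = i - 1)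
    (li : Pn K n) (hli : li ∈ Psub K n (i - 1))
    (ui : DerPn K n) (hui : ui ∈ U K n (i + 1))
    (lam : K) (hlam : lam ≠ 0)
    (u' : DerPn K n) (hu' : u' ∈ U K n i)
    (hbr : ⁅lam • pderiv idx1 + u', li • pderiv idx2 + ui⁆ = (0 : DerPn K n)) :
    (pderiv idx1) li = 0 ∧ li ∈ Psub K n (i - 2) := by
  -- basic index facts
  have hne12 : idx1 ≠ idx2 := by
    intro h; rw [h] at hidx1; omega
  have hlivars : ↑li.vars ⊆ {k : Fin n | (k : ℕ) < i - 1} :=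
    (MvPolynomial.mem_supported).1 hli
  -- u' kills li
  have hu'li : u' li = 0 := by
    apply MvPolynomial.derivation_eq_zero_of_forall_mem_vars
    intro j hj
    exact (hu' j).2 (by have := hlivars hj; simp only [Set.mem_setOf_eq] at this; omega)
  -- the polynomial f = u'(X idx2) lies in P_{i-1}
  set f : Pn K n := u' (X idx2) with hf
  have hfmem : ↑f.vars ⊆ {k : Fin n | (k : ℕ) < i - 1} := by
    have := (hu' idx2).1
    rw [Psub, MvPolynomial.mem_supported] at this
    intro k hk
    have := this hk
    simp only [Set.mem_setOf_eq] at this ⊢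
    omega
  have hdfzero : pderiv idx2 f = 0 := by
    apply MvPolynomial.derivation_eq_zero_of_forall_mem_vars
    intro j hj
    apply pderiv_X_of_ne
    intro h
    have := hfmem hj
    rw [h] at this
    simp only [Set.mem_setOf_eq, hidx2] at this
    omega
  have huif : ui f = 0 := by
    apply MvPolynomial.derivation_eq_zero_of_forall_mem_vars
    intro j hj
    exact (hui j).2 (by have := hfmem hj; simp only [Set.mem_setOf_eq] at this; omega)
  have huix2 : ui (X idx2) = 0 := (hui idx2).2 (by omega)
  -- evaluate the bracket at X idx2
  have h0 := congrArg (fun D : DerPn K n => D (X idx2)) hbr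
  simp only [Derivation.commutator_apply, Derivation.zero_apply] at h0
  have hE : (li • pderiv idx2 + ui : DerPn K n) (X idx2) = li := by
    simp [huix2]
  have hD : (lam • pderiv idx1 + u' : DerPn K n) (X idx2) = f := by
    simp [Pi.single_eq_of_ne hne12.symm, hf]
  rw [hE, hD] at h0
  have h1 : (lam • pderiv idx1 + u' : DerPn K n) li = lam • pderiv idx1 li := by
    simp [hu'li]
  have h2 : (li • pderiv idx2 + ui : DerPn K n) f = 0 := by
    simp [hdfzero, huif]
  rw [h1, h2, sub_zero] at h0
  have hder : pderiv idx1 li = 0 := by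
    rcases smul_eq_zero.1 h0 with h | h
    · exact absurd h hlam
    · exact h
  refine ⟨hder, ?_⟩
  rw [Psub, MvPolynomial.mem_supported]
  intro k hk
  have h3 := hlivars hk
  simp only [Set.mem_setOf_eq] at h3 ⊢
  have hkne : k ≠ idx1 := by
    intro h
    exact pderiv_ne_zero_of_mem_vars (h ▸ hk) hder
  have : (k : ℕ) ≠ i - 2 := by
    intro h; apply hkne; apply Fin.ext; rw [h, hidx1]
  omega
end
end

section
/- Let 1 ≤ k < i ≤ n, λ_k ∈ K*, u_k ∈ u_{n,k+1}, λᵢ ∈ P_k, uᵢ ∈ u_{n,i+1}. If [λ_k∂_k + u_k, λᵢ∂ᵢ + uᵢ] = 0 in u_n, then ∂_k(λᵢ) = 0, i.e., λᵢ ∈ P_{k-1}. -/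
open MvPolynomial

noncomputable section

lemma coeff_pderiv' {K : Type} [CommRing K] {σ : Type} [DecidableEq σ] (i : σ) (p : MvPolynomial σ K)
    (m : σ →₀ ℕ) : coeff m (pderiv i p) = (m i + 1 : ℕ) * coeff (m + Finsupp.single i 1) p := by
  induction p using MvPolynomial.induction_on' with
  | monomial s a =>
    rw [pderiv_monomial]
    by_cases h : s = m + Finsupp.single i 1
    · subst h
      have h1 : (m + Finsupp.single i 1) - Finsupp.single i 1 = m := by
        ext j; by_cases hj : j = i <;> simp [hj, Finsupp.single_apply]
      rw [h1, coeff_monomial, coeff_monomial]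
      simp [Finsupp.single_apply, mul_comm]
    · rw [coeff_monomial, coeff_monomial, if_neg h, mul_zero]
      by_cases hs : s i = 0
      · simp [hs]
      · rw [if_neg]
        intro he
        apply h
        rw [← he]
        ext j
        by_cases hj : j = i
        · simp [hj, Finsupp.single_apply, Nat.sub_add_cancel (Nat.one_le_iff_ne_zero.mpr hs)]
        · simp [Finsupp.single_apply, Ne.symm hj]
  | add p q hp hq => simp [hp, hq, mul_add]

lemma not_mem_vars_of_pderiv_eq_zero {K : Type} [Field K] [CharZero K] {σ : Type} [DecidableEq σ]
    {i : σ} {p : MvPolynomial σ K} (h : pderiv i p = 0) : i ∉ p.vars := by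
  intro hv
  rw [mem_vars] at hv
  obtain ⟨d, hd, hid⟩ := hv
  have hdi : d i ≠ 0 := Finsupp.mem_support_iff.mp hid
  have hcd : coeff d p ≠ 0 := MvPolynomial.mem_support_iff.mp hd
  have key := coeff_pderiv' i p (d - Finsupp.single i 1)
  have hm : (d - Finsupp.single i 1) + Finsupp.single i 1 = d := by
    ext j
    by_cases hj : j = i
    · simp [hj, Finsupp.single_apply, Nat.sub_add_cancel (Nat.one_le_iff_ne_zero.mpr hdi)]
    · simp [Finsupp.single_apply, Ne.symm hj]
  rw [hm, h] at key
  simp only [coeff_zero] at key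
  rcases mul_eq_zero.mp key.symm with h1 | h1
  · rw [Nat.cast_eq_zero] at h1
    exact absurd h1 (Nat.succ_ne_zero _)
  · exact hcd h1

/-- let `1 ≤ k < i ≤ n`, `λ_k ∈ K*`, `u_k ∈ u_{n,k+1}`, `λᵢ ∈ P_k`,
`uᵢ ∈ u_{n,i+1}`. If `[λ_k∂_k + u_k, λᵢ∂ᵢ + uᵢ] = 0` then `∂_k(λᵢ) = 0`, i.e. `λᵢ ∈ P_{k-1}`. -/
theorem lambda_drops (K : Type) [Field K] [CharZero K] (n : ℕ) (hn : 2 ≤ n)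
    (k i : ℕ) (hk : 1 ≤ k) (hki : k < i) (hin : i ≤ n)
    (idxk idxi : Fin n) (hidxk : (idxk : ℕ) = k - 1) (hidxi : (idxi : ℕ) = i - 1)
    (lamk : K) (hlamk : lamk ≠ 0)
    (uk : DerPn K n) (huk : uk ∈ U K n (k + 1))
    (li : Pn K n) (hli : li ∈ Psub K n k)
    (ui : DerPn K n) (hui : ui ∈ U K n (i + 1))
    (hbr : ⁅lamk • pderiv idxk + uk, li • pderiv idxi + ui⁆ = (0 : DerPn K n)) :
    (pderiv idxk) li = 0 ∧ li ∈ Psub K n (k - 1) := by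
  have hkn : idxk ≠ idxi := by
    intro h
    apply absurd (congrArg (Fin.val) h)
    rw [hidxk, hidxi]
    omega
  -- bracket applied to X idxi
  have heq := congrArg (fun D : DerPn K n => D (X idxi)) hbr
  simp only [Derivation.commutator_apply, Derivation.zero_apply] at heq
  -- D2 (X idxi) = li
  have hui0 : ui (X idxi) = 0 := (hui idxi).2 (by omega)
  have hD2Xi : (li • pderiv idxi + ui : DerPn K n) (X idxi) = li := by
    simp [Derivation.add_apply, hui0, pderiv_X_self]
  -- D1 (X idxi) = uk (X idxi)
  have hD1Xi : (lamk • pderiv idxk + uk : DerPn K n) (X idxi) = uk (X idxi) := by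
    rw [Derivation.add_apply, Derivation.smul_apply, pderiv_X_of_ne (Ne.symm hkn), smul_zero, zero_add]
  -- uk li = 0
  have hukli : uk li = 0 := by
    apply derivation_eq_zero_of_forall_mem_vars
    intro j hj
    have hjk : (j : ℕ) < k := (mem_supported.mp hli) hj
    exact (huk j).2 (by omega)
  -- D2 (uk (X idxi)) = 0
  have hD2uk : (li • pderiv idxi + ui : DerPn K n) (uk (X idxi)) = 0 := by
    apply derivation_eq_zero_of_forall_mem_vars
    intro j hj
    have hji : (j : ℕ) < (idxi : ℕ) := (mem_supported.mp (huk idxi).1) hj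
    have hjne : j ≠ idxi := fun h => by simp [h] at hji
    have : ui (X j) = 0 := (hui j).2 (by omega)
    simp [Derivation.add_apply, pderiv_X_of_ne hjne, this]
  rw [hD2Xi, hD1Xi, hD2uk, sub_zero, Derivation.add_apply, hukli, add_zero,
    Derivation.smul_apply] at heq
  have hpd : (pderiv idxk) li = 0 := by
    have := smul_eq_zero.mp heq
    tauto
  refine ⟨hpd, ?_⟩
  rw [Psub, mem_supported]
  intro j hj
  have hjk : (j : ℕ) < k := (mem_supported.mp hli) hj
  have hjne : j ≠ idxk := fun h => not_mem_vars_of_pderiv_eq_zero hpd (h ▸ hj)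
  have : (j : ℕ) ≠ k - 1 := fun h => hjne (Fin.ext (by omega))
  simp only [Set.mem_setOf_eq]
  omega
end
end

section
/- Let φ : u_n → u_n be an injective Lie algebra homomorphism with φ(∂ⱼ) = ∂ⱼ for j = 1,...,n−1. Then φ(Nᵢ) ⊆ Nᵢ for all i ≥ 0, where Nᵢ = {u ∈ u_n | ad(∂ⱼ)^{i+1}(u) = 0 for j = 1,...,n−1}; and since each Nᵢ is finite-dimensional and φ injective, φ(Nᵢ) = Nᵢ, hence φ is bijective. -/
open MvPolynomial

noncomputable section

/-- `Nᵢ = {u ∈ u_n | ad(∂ⱼ)^{i+1}(u) = 0 for j = 1,…,n-1}` (0-indexed `j < n-1`). -/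
def Nset (K : Type) [Field K] (n i : ℕ) : Set (DerPn K n) :=
  {u | u ∈ U K n 1 ∧ ∀ j : Fin n, (j : ℕ) < n - 1 →
    (fun v : DerPn K n => ⁅(pderiv j : DerPn K n), v⁆)^[i + 1] u = 0}


section AuxLemmas

variable {σ : Type*}

lemma aux_coeff_pderiv {R : Type*} [CommRing R] (j : σ) (p : MvPolynomial σ R) (m : σ →₀ ℕ) :
    coeff m (pderiv j p) = ((m j + 1 : ℕ) : R) * coeff (m + Finsupp.single j 1) p := by
  classical
  induction p using MvPolynomial.induction_on' with
  | add p q hp hq => simp [hp, hq, mul_add]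
  | monomial s a =>
    rw [pderiv_monomial, coeff_monomial, coeff_monomial]
    by_cases hs : s j = 0
    · have hne : s ≠ m + Finsupp.single j 1 := by
        intro h
        apply Nat.succ_ne_zero (m j)
        rw [← hs, h]; simp
      rw [if_neg hne]
      simp [hs]
    · have hle : Finsupp.single j 1 ≤ s :=
        Finsupp.single_le_iff.mpr (Nat.one_le_iff_ne_zero.mpr hs)
      by_cases h : s = m + Finsupp.single j 1
      · have hm : s - Finsupp.single j 1 = m := by rw [h]; simp
        rw [if_pos hm, if_pos h]
        have hsj : s j = m j + 1 := by rw [h]; simp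
        rw [hsj]; push_cast; ring
      · have hm : ¬ s - Finsupp.single j 1 = m := by
          intro hh
          exact h (by rw [← hh, tsub_add_cancel_of_le hle])
        rw [if_neg hm, if_neg h, mul_zero]

lemma aux_coeff_pderiv_iterate {R : Type*} [CommRing R] (j : σ) (s : ℕ) (p : MvPolynomial σ R)
    (m : σ →₀ ℕ) :
    coeff m ((⇑(pderiv j : Derivation R (MvPolynomial σ R) (MvPolynomial σ R)))^[s] p)
      = (∏ t ∈ Finset.range s, ((m j + t + 1 : ℕ) : R)) * coeff (m + Finsupp.single j s) p := by
  classical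
  induction s generalizing m with
  | zero => simp
  | succ s ih =>
    rw [Function.iterate_succ_apply', aux_coeff_pderiv, ih]
    have h1 : m + Finsupp.single j 1 + Finsupp.single j s = m + Finsupp.single j (s + 1) := by
      rw [add_assoc, ← Finsupp.single_add, add_comm 1 s]
    have h2 : ((m + Finsupp.single j 1 : σ →₀ ℕ)) j = m j + 1 := by
      rw [Finsupp.add_apply, Finsupp.single_apply, if_pos rfl]
    rw [h1, h2, Finset.prod_range_succ' (fun t => ((m j + t + 1 : ℕ) : R))]
    have hp : ∏ t ∈ Finset.range s, ((m j + 1 + t + 1 : ℕ) : R)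
        = ∏ t ∈ Finset.range s, ((m j + (t + 1) + 1 : ℕ) : R) :=
      Finset.prod_congr rfl (fun t _ => by congr 1; omega)
    rw [hp, show m j + 0 + 1 = m j + 1 from by omega]
    ring

lemma aux_pderiv_iterate_eq_zero {R : Type*} [CommRing R] (j : σ) (p : MvPolynomial σ R) {s : ℕ}
    (h : p.totalDegree < s) :
    (⇑(pderiv j : Derivation R (MvPolynomial σ R) (MvPolynomial σ R)))^[s] p = 0 := by
  ext m
  rw [aux_coeff_pderiv_iterate, coeff_zero]
  convert mul_zero _
  by_contra hc
  have hmem := MvPolynomial.mem_support_iff.mpr hc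
  have hd : p.degreeOf j < s := lt_of_le_of_lt (degreeOf_le_totalDegree p j) h
  have := (MvPolynomial.degreeOf_lt_iff (lt_of_le_of_lt (Nat.zero_le _) h)).mp hd _ hmem
  simp [Finsupp.add_apply, Finsupp.single_apply] at this

lemma aux_support_bound {K : Type} [Field K] [CharZero K] (j : σ) (p : MvPolynomial σ K)
    {i : ℕ} (h : (⇑(pderiv j : Derivation K (MvPolynomial σ K) (MvPolynomial σ K)))^[i + 1] p = 0)
    (m : σ →₀ ℕ) (hm : m ∈ p.support) : m j ≤ i := by
  classical
  by_contra hc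
  have hle : Finsupp.single j (i + 1) ≤ m := Finsupp.single_le_iff.mpr (by omega)
  have key := aux_coeff_pderiv_iterate j (i + 1) p (m - Finsupp.single j (i + 1))
  rw [h, coeff_zero, tsub_add_cancel_of_le hle] at key
  have hprod : (∏ t ∈ Finset.range (i + 1),
      (((m - Finsupp.single j (i + 1) : σ →₀ ℕ) j + t + 1 : ℕ) : K)) ≠ 0 := by
    apply Finset.prod_ne_zero_iff.mpr
    intro t _
    exact Nat.cast_ne_zero.mpr (Nat.succ_ne_zero _)
  have hcoeff : coeff m p ≠ 0 := MvPolynomial.mem_support_iff.mp hm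
  rcases mul_eq_zero.mp key.symm with h1 | h2
  · exact hprod h1
  · exact hcoeff h2

lemma aux_bracket_iterate_apply_X {K : Type} [Field K] {n : ℕ} (j k : Fin n) (m : ℕ)
    (u : DerPn K n) :
    ((fun v : DerPn K n => ⁅(pderiv j : DerPn K n), v⁆)^[m] u) (X k)
      = (⇑(pderiv j : DerPn K n))^[m] (u (X k)) := by
  induction m generalizing u with
  | zero => rfl
  | succ m ih =>
    rw [Function.iterate_succ_apply', Function.iterate_succ_apply',
      Derivation.commutator_apply, ← ih]
    rcases eq_or_ne k j with rfl | h
    · rw [pderiv_X_self]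
      simp [Derivation.map_one_eq_zero]
    · rw [pderiv_X_of_ne h]
      simp

lemma aux_iterate_linear {K : Type} [Field K] {n : ℕ} (j : Fin n) (m : ℕ) :
    (fun v : DerPn K n => ⁅(pderiv j : DerPn K n), v⁆)^[m]
      = ⇑((LieAlgebra.ad K (DerPn K n) (pderiv j)) ^ m) := by
  have h : (fun v : DerPn K n => ⁅(pderiv j : DerPn K n), v⁆)
      = ⇑(LieAlgebra.ad K (DerPn K n) (pderiv j)) := by
    funext v
    rw [LieAlgebra.ad_apply]
  rw [h]
  funext v
  rw [Module.End.pow_apply]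

end AuxLemmas

set_option maxHeartbeats 2000000 in
/-- if `φ : u_n → u_n` is an injective Lie algebra homomorphism fixing
`∂₁, …, ∂_{n-1}`, then `φ(Nᵢ) ⊆ Nᵢ` for all `i`, and `φ` is bijective. -/
theorem phi_preserves_N_and_bijective (K : Type) [Field K] [CharZero K] (n : ℕ) (hn : 2 ≤ n)
    (L : LieSubalgebra K (DerPn K n)) (hL : L.toSubmodule = U K n 1)
    (φ : L →ₗ⁅K⁆ L) (hφ : Function.Injective φ)
    (hfix : ∀ j : Fin n, (j : ℕ) < n - 1 → ∀ x : L, (x : DerPn K n) = pderiv j →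
      ((φ x : L) : DerPn K n) = pderiv j) :
    (∀ (i : ℕ) (x : L), (x : DerPn K n) ∈ Nset K n i →
      ((φ x : L) : DerPn K n) ∈ Nset K n i) ∧
    Function.Bijective φ := by
  classical
  have memL : ∀ x : DerPn K n, x ∈ L ↔ x ∈ U K n 1 := by
    intro x
    rw [← hL]
    exact (LieSubalgebra.mem_toSubmodule (L' := L)).symm
  have hpmem : ∀ j : Fin n, (pderiv j : DerPn K n) ∈ L := by
    intro j
    rw [memL]
    intro k
    refine ⟨?_, by omega⟩
    rcases eq_or_ne k j with rfl | h
    · rw [pderiv_X_self]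
      exact (Psub K n k).one_mem
    · rw [pderiv_X_of_ne h]
      exact (Psub K n k).zero_mem
  have key0 : ∀ (j : Fin n) (m : ℕ) (x : L),
      (fun v : DerPn K n => ⁅(pderiv j : DerPn K n), v⁆)^[m] (x : DerPn K n)
        = (((fun z : L => ⁅(⟨pderiv j, hpmem j⟩ : L), z⁆)^[m] x : L) : DerPn K n) := by
    intro j m
    induction m with
    | zero => intro x; rfl
    | succ m ih =>
      intro x
      rw [Function.iterate_succ_apply, Function.iterate_succ_apply]
      have hb : ⁅(pderiv j : DerPn K n), (x : DerPn K n)⁆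
          = ((⁅(⟨pderiv j, hpmem j⟩ : L), x⁆ : L) : DerPn K n) := rfl
      rw [hb]
      exact ih _
  have key : ∀ (j : Fin n), (j : ℕ) < n - 1 → ∀ (m : ℕ) (x : L),
      (fun v : DerPn K n => ⁅(pderiv j : DerPn K n), v⁆)^[m] ((φ x : L) : DerPn K n)
        = ((φ ((fun z : L => ⁅(⟨pderiv j, hpmem j⟩ : L), z⁆)^[m] x) : L) : DerPn K n) := by
    intro j hj m
    induction m with
    | zero => intro x; rfl
    | succ m ih =>
      intro x
      rw [Function.iterate_succ_apply, Function.iterate_succ_apply]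
      have hb : ⁅(pderiv j : DerPn K n), ((φ x : L) : DerPn K n)⁆
          = ((φ ⁅(⟨pderiv j, hpmem j⟩ : L), x⁆ : L) : DerPn K n) := by
        rw [LieHom.map_lie, LieSubalgebra.coe_bracket, hfix j hj ⟨pderiv j, hpmem j⟩ rfl]
      rw [hb]
      exact ih _
  have part1 : ∀ (i : ℕ) (x : L), (x : DerPn K n) ∈ Nset K n i →
      ((φ x : L) : DerPn K n) ∈ Nset K n i := by
    intro i x hx
    refine ⟨(memL _).mp (φ x).2, fun j hj => ?_⟩
    have hg : (fun z : L => ⁅(⟨pderiv j, hpmem j⟩ : L), z⁆)^[i + 1] x = 0 := by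
      have h0 := hx.2 j hj
      rw [key0 j (i + 1) x] at h0
      exact Subtype.coe_injective h0
    rw [key j hj (i + 1) x, hg, map_zero]
    rfl
  refine ⟨part1, hφ, ?_⟩
  intro y
  have hyNex : ∃ i : ℕ, ((y : L) : DerPn K n) ∈ Nset K n i := by
    refine ⟨Finset.univ.sup (fun k : Fin n => (((y : L) : DerPn K n) (X k)).totalDegree),
      (memL _).mp y.2, fun j hj => ?_⟩
    refine derivation_ext fun k => ?_
    have hd : (((y : L) : DerPn K n) (X k)).totalDegree
        < Finset.univ.sup (fun k : Fin n => (((y : L) : DerPn K n) (X k)).totalDegree) + 1 :=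
      Nat.lt_succ_of_le (Finset.le_sup
        (f := fun k : Fin n => (((y : L) : DerPn K n) (X k)).totalDegree) (Finset.mem_univ k))
    rw [aux_bracket_iterate_apply_X, aux_pderiv_iterate_eq_zero j _ hd]
    simp
  obtain ⟨i, hyN⟩ := hyNex
  let W : Submodule K L :=
    { carrier := {x : L | (x : DerPn K n) ∈ Nset K n i}
      add_mem' := by
        intro a b ha hb
        refine ⟨(U K n 1).add_mem ha.1 hb.1, fun j hj => ?_⟩
        have ha2 := ha.2 j hj
        have hb2 := hb.2 j hj
        rw [aux_iterate_linear] at ha2 hb2 ⊢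
        rw [show ((a + b : L) : DerPn K n) = (a : DerPn K n) + (b : DerPn K n) from rfl,
          map_add, ha2, hb2, add_zero]
      zero_mem' := by
        refine ⟨?_, fun j hj => ?_⟩
        · exact (U K n 1).zero_mem
        · rw [show ((0 : L) : DerPn K n) = 0 from rfl, aux_iterate_linear]
          exact map_zero _
      smul_mem' := by
        intro c a ha
        refine ⟨(U K n 1).smul_mem c ha.1, fun j hj => ?_⟩
        have ha2 := ha.2 j hj
        rw [aux_iterate_linear] at ha2 ⊢
        rw [show ((c • a : L) : DerPn K n) = c • (a : DerPn K n) from rfl,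
          map_smul, ha2, smul_zero] }
  have hdeg : ∀ x : W, ∀ k : Fin n,
      (((x : L) : DerPn K n) (X k)) ∈ restrictDegree (Fin n) K i := by
    intro x k
    rw [mem_restrictDegree]
    intro s hs j
    by_cases hj : (j : ℕ) < n - 1
    · have h0 := x.2.2 j hj
      have h1 : (⇑(pderiv j : DerPn K n))^[i + 1] (((x : L) : DerPn K n) (X k)) = 0 := by
        rw [← aux_bracket_iterate_apply_X, h0]
        rfl
      exact aux_support_bound j _ h1 s hs
    · have hsup := (x.2.1 k).1
      rw [Psub, mem_supported] at hsup
      by_contra hcon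
      have hjv : j ∈ (((x : L) : DerPn K n) (X k)).vars :=
        (mem_vars j).mpr ⟨s, hs, Finsupp.mem_support_iff.mpr (by omega)⟩
      have hlt := hsup hjv
      simp only [Set.mem_setOf_eq] at hlt
      have hk := k.isLt
      omega
  let G : W →ₗ[K] (Fin n → restrictDegree (Fin n) K i) :=
    { toFun := fun x k => ⟨((x : L) : DerPn K n) (X k), hdeg x k⟩
      map_add' := by intro a b; funext k; apply Subtype.ext; rfl
      map_smul' := by intro c a; funext k; apply Subtype.ext; rfl }
  have hGinj : Function.Injective G := by
    intro a b hab
    refine Subtype.ext (Subtype.ext (derivation_ext fun k => ?_))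
    exact Subtype.ext_iff.mp (congrFun hab k)
  haveI : FiniteDimensional K W := FiniteDimensional.of_injective G hGinj
  have hmap : ∀ x : L, x ∈ W → φ.toLinearMap x ∈ W := fun x hx => part1 i x hx
  let ψ : W →ₗ[K] W := LinearMap.restrict φ.toLinearMap hmap
  have hψinj : Function.Injective ψ := by
    intro a b hab
    have h1 : φ (a : L) = φ (b : L) := by
      have h2 := Subtype.ext_iff.mp hab
      simpa [ψ, LinearMap.restrict_apply] using h2
    exact Subtype.ext (hφ h1)
  obtain ⟨x, hx⟩ := LinearMap.injective_iff_surjective.mp hψinj ⟨y, hyN⟩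
  refine ⟨(x : L), ?_⟩
  have h3 := Subtype.ext_iff.mp hx
  simpa [ψ, LinearMap.restrict_apply] using h3
end
end
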